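/- Let J_n ∈ 𝒥_n with β = b_1⋯b_n real nonzero and Im a_n > 0. Then every eigenvalue of J_n lies in the closed upper half-plane, and an eigenvalue of J_n is real if and only if it is an eigenvalue of the leading principal submatrix J_{n−1}. -/

import Mathlib

open Polynomial Matrix Finset

noncomputable section

/-- The corner-bordered complex Jacobi matrix of the class `𝒥_n`: real diagonal
entries `c 0, …, c (n−2)`, complex entry `a` at position `(n−1, n−1)`, superdiagonal
entries `b 0, …, b (n−2)` with their conjugates on the subdiagonal, and corner entries
`conj (b (n−1))` at `(0, n−1)` and `b (n−1)` at `(n−1, 0)`. -/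
def cornerJacobi (n : ℕ) (c : ℕ → ℝ) (b : ℕ → ℂ) (a : ℂ) :
    Matrix (Fin n) (Fin n) ℂ :=
  Matrix.of fun i j =>
    if (i : ℕ) = (j : ℕ) then (if (i : ℕ) = n - 1 then a else ((c (i : ℕ) : ℝ) : ℂ))
    else if (i : ℕ) = 0 ∧ (j : ℕ) = n - 1 then (starRingEnd ℂ) (b (n - 1))
    else if (i : ℕ) = n - 1 ∧ (j : ℕ) = 0 then b (n - 1)
    else if (i : ℕ) + 1 = (j : ℕ) then b (i : ℕ)
    else if (j : ℕ) + 1 = (i : ℕ) then (starRingEnd ℂ) (b (j : ℕ))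
    else 0

/-- The leading principal `(n−1)×(n−1)` submatrix of `cornerJacobi n c b a`. -/
def cornerJacobiSub (n : ℕ) (c : ℕ → ℝ) (b : ℕ → ℂ) (a : ℂ) :
    Matrix (Fin (n - 1)) (Fin (n - 1)) ℂ :=
  (cornerJacobi n c b a).submatrix (Fin.castLE (Nat.sub_le n 1)) (Fin.castLE (Nat.sub_le n 1))

/-- A complex number is a root of the characteristic polynomial iff it is an
eigenvalue in the concrete `mulVec` sense. -/
lemma isRoot_charpoly_iff {k : ℕ} (M : Matrix (Fin k) (Fin k) ℂ) (lam : ℂ) :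
    M.charpoly.IsRoot lam ↔ ∃ v : Fin k → ℂ, v ≠ 0 ∧ M.mulVec v = lam • v := by
  have hdet : M.charpoly.eval lam = (Matrix.diagonal (fun _ => lam) - M).det := by
    rw [Matrix.charpoly, ← Polynomial.coe_evalRingHom, RingHom.map_det]
    congr 1
    ext i j
    by_cases h : i = j
    · subst h; simp [Matrix.charmatrix_apply_eq]
    · simp [Matrix.charmatrix_apply_ne _ _ _ h, Matrix.diagonal_apply_ne _ h]
  rw [Polynomial.IsRoot, hdet, ← Matrix.exists_mulVec_eq_zero_iff]
  have hdiag : ∀ v : Fin k → ℂ, (Matrix.diagonal fun _ => lam).mulVec v = lam • v := by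
    intro v; ext i; simp [Matrix.mulVec_diagonal]
  constructor
  · rintro ⟨v, hv, h⟩
    refine ⟨v, hv, ?_⟩
    rw [Matrix.sub_mulVec, hdiag, sub_eq_zero] at h
    exact h.symm
  · rintro ⟨v, hv, h⟩
    exact ⟨v, hv, by rw [Matrix.sub_mulVec, hdiag, h, sub_self]⟩

/-- Hermitian symmetry of `cornerJacobi` away from the lower-right corner entry. -/
lemma cornerJacobi_conj (n : ℕ) (hn : 3 ≤ n) (c : ℕ → ℝ) (b : ℕ → ℂ) (a : ℂ)
    (i j : Fin n) (h : (i : ℕ) ≠ n - 1 ∨ (j : ℕ) ≠ n - 1) :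
    (starRingEnd ℂ) (cornerJacobi n c b a j i) = cornerJacobi n c b a i j := by
  have hi := i.isLt; have hj := j.isLt
  rcases h with h | h <;>
  · simp only [cornerJacobi, of_apply]
    split_ifs <;> first
      | omega
      | (simp [Complex.conj_ofReal]; try exact congrArg c (by omega))

lemma quadForm_eq {k : ℕ} (M : Matrix (Fin k) (Fin k) ℂ) (v : Fin k → ℂ) (lam : ℂ)
    (h : M.mulVec v = lam • v) :
    ∑ i, ∑ j, (starRingEnd ℂ) (v i) * M i j * v j
      = lam * (∑ i, (Complex.normSq (v i) : ℂ)) := by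
  have h1 : ∀ i, ∑ j, (starRingEnd ℂ) (v i) * M i j * v j
      = (starRingEnd ℂ) (v i) * (M.mulVec v i) := by
    intro i
    rw [Matrix.mulVec, dotProduct, Finset.mul_sum]
    exact Finset.sum_congr rfl fun j _ => by ring
  simp_rw [h1, h, Pi.smul_apply, smul_eq_mul]
  rw [Finset.mul_sum]
  refine Finset.sum_congr rfl fun i _ => ?_
  rw [Complex.normSq_eq_conj_mul_self]
  ring

lemma conj_quadForm {k : ℕ} (M : Matrix (Fin k) (Fin k) ℂ) (v : Fin k → ℂ) :
    (starRingEnd ℂ) (∑ i, ∑ j, (starRingEnd ℂ) (v i) * M i j * v j)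
      = ∑ i, ∑ j, (starRingEnd ℂ) (v i) * (starRingEnd ℂ) (M j i) * v j := by
  rw [map_sum]
  simp_rw [map_sum, _root_.map_mul, Complex.conj_conj]
  rw [Finset.sum_comm]
  exact Finset.sum_congr rfl fun i _ => Finset.sum_congr rfl fun j _ => by ring

/-- if `β = b_1⋯b_n` is real nonzero and `Im a_n > 0`, then every
eigenvalue of `J_n` lies in the closed upper half-plane, and an eigenvalue of `J_n`
is real if and only if it is an eigenvalue of the leading submatrix `J_{n−1}`. -/
theorem stmt12 (n : ℕ) (hn : 3 ≤ n) (c : ℕ → ℝ) (b : ℕ → ℂ) (a : ℂ)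
    (hb : ∀ k : ℕ, k < n → b k ≠ 0)
    (hβreal : (∏ k ∈ Finset.range n, b k).im = 0)
    (hβne : (∏ k ∈ Finset.range n, b k) ≠ 0)
    (ha : 0 < a.im) :
    ∀ lam : ℂ, (cornerJacobi n c b a).charpoly.IsRoot lam →
      0 ≤ lam.im ∧ (lam.im = 0 ↔ (cornerJacobiSub n c b a).charpoly.IsRoot lam) := by
  intro lam hroot
  obtain ⟨m, rfl⟩ : ∃ m, n = m + 1 := ⟨n - 1, by omega⟩
  set J := cornerJacobi (m + 1) c b a with hJ
  obtain ⟨v, hv, hev⟩ := (isRoot_charpoly_iff _ _).mp hroot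
  have hsym := fun (i j : Fin (m + 1)) => cornerJacobi_conj (m + 1) hn c b a i j
  have hlast : J (Fin.last m) (Fin.last m) = a := by
    simp [hJ, cornerJacobi]
  set Nr : ℝ := ∑ i, Complex.normSq (v i) with hNr
  set nz : ℝ := Complex.normSq (v (Fin.last m)) with hnz
  have hS : (∑ i, ∑ j, (starRingEnd ℂ) (v i) * J i j * v j) = lam * (Nr : ℂ) := by
    rw [quadForm_eq J v lam hev, hNr, Complex.ofReal_sum]
  have hdiff : (∑ i, ∑ j, (starRingEnd ℂ) (v i) * J i j * v j)
      - (starRingEnd ℂ) (∑ i, ∑ j, (starRingEnd ℂ) (v i) * J i j * v j)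
      = (a - (starRingEnd ℂ) a) * (nz : ℂ) := by
    rw [conj_quadForm, ← Finset.sum_sub_distrib]
    have h2 : ∀ i : Fin (m + 1), ((∑ j, (starRingEnd ℂ) (v i) * J i j * v j)
        - ∑ j, (starRingEnd ℂ) (v i) * (starRingEnd ℂ) (J j i) * v j)
        = ∑ j, (starRingEnd ℂ) (v i) * (J i j - (starRingEnd ℂ) (J j i)) * v j := by
      intro i; rw [← Finset.sum_sub_distrib]
      exact Finset.sum_congr rfl fun j _ => by ring
    simp_rw [h2]
    rw [Finset.sum_eq_single_of_mem (Fin.last m) (Finset.mem_univ _) (fun i _ hi =>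
      Finset.sum_eq_zero fun j _ => by
        rw [hsym i j (Or.inl (by simpa [Fin.ext_iff] using hi)), sub_self, mul_zero, zero_mul])]
    rw [Finset.sum_eq_single_of_mem (Fin.last m) (Finset.mem_univ _) (fun j _ hj => by
      rw [hsym (Fin.last m) j (Or.inr (by simpa [Fin.ext_iff] using hj)), sub_self,
        mul_zero, zero_mul])]
    rw [hlast, hnz, Complex.normSq_eq_conj_mul_self]
    ring
  rw [hS, _root_.map_mul, Complex.conj_ofReal] at hdiff
  have hkey : lam.im * Nr = a.im * nz := by
    have h1 : (lam - (starRingEnd ℂ) lam) * (Nr : ℂ) = (a - (starRingEnd ℂ) a) * (nz : ℂ) := by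
      rw [sub_mul]; exact hdiff
    rw [Complex.sub_conj, Complex.sub_conj] at h1
    have h2 := congrArg Complex.im h1
    simp only [Complex.mul_im, Complex.mul_re, Complex.ofReal_re, Complex.ofReal_im,
      Complex.I_re, Complex.I_im] at h2
    nlinarith [h2]
  have hNpos : 0 < Nr := by
    obtain ⟨i0, hi0⟩ := Function.ne_iff.mp hv
    exact Finset.sum_pos' (fun i _ => Complex.normSq_nonneg _)
      ⟨i0, Finset.mem_univ _, Complex.normSq_pos.mpr hi0⟩
  have hnznn : 0 ≤ nz := Complex.normSq_nonneg _
  constructor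
  · nlinarith [hkey, hNpos, mul_nonneg ha.le hnznn]
  constructor
  · -- lam.im = 0 → root of sub charpoly
    intro him
    have hnz0 : nz = 0 := by nlinarith [hkey]
    have hvlast : v (Fin.last m) = 0 := by
      rw [hnz] at hnz0; exact Complex.normSq_eq_zero.mp hnz0
    rw [isRoot_charpoly_iff]
    refine ⟨fun i => v (Fin.castLE (Nat.sub_le (m + 1) 1) i), ?_, ?_⟩
    · intro h0
      apply hv
      funext i
      refine Fin.lastCases ?_ (fun j => ?_) i
      · exact hvlast
      · have := congrFun h0 j
        exact this
    · funext i
      have hrow : ∑ j : Fin (m + 1), J (Fin.castLE (Nat.sub_le (m + 1) 1) i) j * v j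
          = lam * v (Fin.castLE (Nat.sub_le (m + 1) 1) i) := by
        have := congrFun hev (Fin.castLE (Nat.sub_le (m + 1) 1) i)
        simpa [Matrix.mulVec, dotProduct] using this
      rw [Fin.sum_univ_castSucc, hvlast, mul_zero, add_zero] at hrow
      simp [cornerJacobiSub, Matrix.mulVec, dotProduct, Pi.smul_apply,
        smul_eq_mul]
      exact hrow
  · -- root of sub charpoly → lam.im = 0
    intro hroot'
    obtain ⟨w, hw, hevw⟩ := (isRoot_charpoly_iff _ _).mp hroot'
    set M := cornerJacobiSub (m + 1) c b a with hM
    have hSw : (∑ i, ∑ j, (starRingEnd ℂ) (w i) * M i j * w j)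
        = lam * ((∑ i, Complex.normSq (w i) : ℝ) : ℂ) := by
      rw [quadForm_eq M w lam hevw, Complex.ofReal_sum]
    have hherm : (starRingEnd ℂ) (∑ i, ∑ j, (starRingEnd ℂ) (w i) * M i j * w j)
        = ∑ i, ∑ j, (starRingEnd ℂ) (w i) * M i j * w j := by
      rw [conj_quadForm]
      refine Finset.sum_congr rfl fun i _ => Finset.sum_congr rfl fun j _ => ?_
      congr 1
      congr 1
      have hlt := i.isLt
      exact hsym _ _ (Or.inl (by simp only [Fin.coe_castLE]; omega))
    rw [hSw, _root_.map_mul, Complex.conj_ofReal] at hherm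
    have hNw : (0 : ℝ) < ∑ i, Complex.normSq (w i) := by
      obtain ⟨i0, hi0⟩ := Function.ne_iff.mp hw
      exact Finset.sum_pos' (fun i _ => Complex.normSq_nonneg _)
        ⟨i0, Finset.mem_univ _, Complex.normSq_pos.mpr hi0⟩
    have hc : (starRingEnd ℂ) lam = lam :=
      mul_right_cancel₀ (by exact_mod_cast hNw.ne') hherm
    exact Complex.conj_eq_iff_im.mp hc
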